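/- The probability that random sequential covering by dimers of an interval with L sites terminates in the maximally congested configuration with N = L dimers equals M(L) = ∏_{j=2}^{L+1} (2/j) = 2^L/(L+1)!. -/
import Mathlib


/-- Full counting statistics of random sequential dimer covering: `P N L` is the probability
that the covering of an interval of `L` sites terminates with exactly `N` dimers, determined
by conditioning on the first dimer position. The probability of the maximally congested
configuration is `P L L = 2^L / (L+1)!`. -/
theorem maximal_congestion_dimers (P : ℕ → ℤ → ℚ)
    (hm1 : P 0 (-1) = 1) (h00 : P 0 0 = 1)
    (hbase : ∀ N : ℕ, 1 ≤ N → P N (-1) = 0 ∧ P N 0 = 0)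
    (hrec : ∀ (N : ℕ) (L : ℤ), 1 ≤ L →
      ((L : ℚ) + 1) * P N L =
        ∑ k ∈ Finset.Icc (1 : ℤ) (L + 1), ∑ a ∈ Finset.range N,
          P a (k - 2) * P (N - 1 - a) (L - k)) :
    ∀ L : ℕ, 1 ≤ L → P L (L : ℤ) = 2 ^ L / (Nat.factorial (L + 1) : ℚ) := by
  -- vanishing lemma: P N L = 0 whenever L < N (and 1 ≤ N), for L ≥ -1
  have hz : ∀ (M : ℕ) (L : ℤ) (N : ℕ), L + 1 = (M : ℤ) → L < (N : ℤ) → 1 ≤ N → P N L = 0 := by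
    intro M
    induction M using Nat.strong_induction_on with
    | _ M ih =>
      intro L N hLM hLN hN
      by_cases hM0 : M = 0
      · have hL : L = -1 := by omega
        rw [hL]; exact (hbase N hN).1
      by_cases hM1 : M = 1
      · have hL : L = 0 := by omega
        rw [hL]; exact (hbase N hN).2
      · have hL1 : (1 : ℤ) ≤ L := by omega
        have h := hrec N L hL1
        have hsum : (∑ k ∈ Finset.Icc (1:ℤ) (L+1), ∑ a ∈ Finset.range N,
            P a (k-2) * P (N-1-a) (L-k)) = 0 := by
          apply Finset.sum_eq_zero
          intro k hk
          rw [Finset.mem_Icc] at hk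
          apply Finset.sum_eq_zero
          intro a ha
          rw [Finset.mem_range] at ha
          rcases lt_or_ge (a:ℤ) (k-1) with h1 | h1
          · have h2 : P (N-1-a) (L-k) = 0 :=
              ih (L-k+1).toNat (by omega) (L-k) (N-1-a) (by omega) (by omega) (by omega)
            rw [h2, mul_zero]
          · rcases Nat.eq_zero_or_pos a with h2 | h2
            · have hk1 : k = 1 := by omega
              subst hk1
              have h3 : P (N-1-a) (L-1) = 0 :=
                ih L.toNat (by omega) (L-1) (N-1-a) (by omega) (by omega) (by omega)
              rw [h3, mul_zero]
            · have h3 : P a (k-2) = 0 :=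
                ih (k-1).toNat (by omega) (k-2) a (by omega) (by omega) h2
              rw [h3, zero_mul]
        rw [hsum] at h
        have hne : ((L:ℚ) + 1) ≠ 0 := by
          have : (1:ℚ) ≤ (L:ℚ) := by exact_mod_cast hL1
          linarith
        exact (mul_eq_zero.mp h).resolve_left hne
  have main : ∀ L : ℕ, P L (L : ℤ) = 2 ^ L / (Nat.factorial (L + 1) : ℚ) := by
    intro L
    induction L with
    | zero => simpa [Nat.factorial] using h00
    | succ n ihn =>
      have h := hrec (n+1) ((n:ℤ)+1) (by omega)
      have hsum : (∑ k ∈ Finset.Icc (1:ℤ) ((n:ℤ)+1+1), ∑ a ∈ Finset.range (n+1),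
          P a (k-2) * P (n+1-1-a) ((n:ℤ)+1-k)) = 2 * P n (n:ℤ) := by
        have hset : Finset.Icc (1:ℤ) ((n:ℤ)+1+1)
            = insert 1 (insert ((n:ℤ)+2) (Finset.Icc 2 ((n:ℤ)+1))) := by
          ext x; simp only [Finset.mem_Icc, Finset.mem_insert]; omega
        rw [hset, Finset.sum_insert (by simp only [Finset.mem_Icc, Finset.mem_insert]; omega),
          Finset.sum_insert (by simp only [Finset.mem_Icc]; omega)]
        have hS1 : ∑ a ∈ Finset.range (n+1), P a ((1:ℤ)-2) * P (n+1-1-a) ((n:ℤ)+1-1)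
            = P n (n:ℤ) := by
          rw [Finset.sum_eq_single 0]
          · norm_num [hm1]
          · intro b hb hb0
            have hb1 : P b ((1:ℤ)-2) = 0 := by
              have := (hbase b (by omega)).1
              norm_num [this]
            rw [hb1, zero_mul]
          · intro hcon; simp at hcon
        have hS2 : ∑ a ∈ Finset.range (n+1), P a ((n:ℤ)+2-2) * P (n+1-1-a) ((n:ℤ)+1-((n:ℤ)+2))
            = P n (n:ℤ) := by
          rw [Finset.sum_eq_single n]
          · norm_num [hm1]
          · intro b hb hbn
            rw [Finset.mem_range] at hb
            have hb1 : P (n+1-1-b) ((n:ℤ)+1-((n:ℤ)+2)) = 0 := by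
              rw [show n+1-1-b = n-b from by omega,
                show (n:ℤ)+1-((n:ℤ)+2) = -1 from by ring]
              exact (hbase (n-b) (by omega)).1
            rw [hb1, mul_zero]
          · intro hcon; simp at hcon
        have hmid : ∑ k ∈ Finset.Icc (2:ℤ) ((n:ℤ)+1), ∑ a ∈ Finset.range (n+1),
            P a (k-2) * P (n+1-1-a) ((n:ℤ)+1-k) = 0 := by
          apply Finset.sum_eq_zero; intro k hk
          rw [Finset.mem_Icc] at hk
          apply Finset.sum_eq_zero; intro a ha
          rw [Finset.mem_range] at ha
          rcases lt_or_ge (a:ℤ) (k-1) with h1 | h1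
          · have h2 : P (n+1-1-a) ((n:ℤ)+1-k) = 0 :=
              hz ((n:ℤ)+2-k).toNat ((n:ℤ)+1-k) (n+1-1-a) (by omega) (by omega) (by omega)
            rw [h2, mul_zero]
          · have h2 : P a (k-2) = 0 :=
              hz (k-1).toNat (k-2) a (by omega) (by omega) (by omega)
            rw [h2, zero_mul]
        rw [hS1, hS2, hmid]; ring
      rw [hsum, ihn] at h
      have hcast : ((n:ℕ)+1 : ℕ) = ((n:ℤ)+1 : ℤ) := by push_cast; ring
      have hfac : (Nat.factorial (n+1+1) : ℚ) = ((n:ℚ)+2) * (Nat.factorial (n+1) : ℚ) := by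
        rw [Nat.factorial_succ]; push_cast; ring
      have hne1 : ((n:ℚ)+2) ≠ 0 := by positivity
      have hne2 : (Nat.factorial (n+1) : ℚ) ≠ 0 := Nat.cast_ne_zero.mpr (Nat.factorial_ne_zero _)
      have hgoal : P (n+1) (((n+1 : ℕ) : ℤ)) = P (n+1) ((n:ℤ)+1) := by push_cast; ring_nf
      rw [hgoal, hfac]
      have hP : P (n+1) ((n:ℤ)+1) = 2 * (2 ^ n / (Nat.factorial (n+1) : ℚ)) / ((n:ℚ)+2) := by
        have hcast2 : (((n:ℤ)+1 : ℤ) : ℚ) = (n:ℚ)+1 := by push_cast; ring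
        rw [hcast2] at h
        field_simp at h ⊢
        linarith
      rw [hP]
      field_simp
      ring
  intro L _
  exact main L
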